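/- arXiv:2403.01565 — 3 statements merged into one kernel-verified Lean document; each statement's English description precedes it below -/
import Mathlib

section
/- Let {ρ_y}_{y∈Y} with ρ_y(n) := μ_y({f : |f| = n}) be tight, i.e., for every ε > 0 there exists n with μ_y({f : |f| ≤ n}) > 1 − ε for all y ∈ Y. Then the generating function G_μ : [0,1]^X → [0,1]^Y is uniformly continuous with respect to the sup-norm distances on [0,1]^X and [0,1]^Y. -/
open Finset

lemma prod_sub_prod_abs_le {ι : Type*} (s : Finset ι) (a b : ι → ℝ)
    (ha : ∀ i ∈ s, a i ∈ Set.Icc (0:ℝ) 1) (hb : ∀ i ∈ s, b i ∈ Set.Icc (0:ℝ) 1) :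
    |∏ i ∈ s, a i - ∏ i ∈ s, b i| ≤ ∑ i ∈ s, |a i - b i| := by
  induction s using Finset.cons_induction with
  | empty => simp
  | @cons j s hj ih =>
    have haj := ha j (mem_cons_self j s)
    have hbj := hb j (mem_cons_self j s)
    have ha' : ∀ i ∈ s, a i ∈ Set.Icc (0:ℝ) 1 := fun i hi => ha i (mem_cons_of_mem hi)
    have hb' : ∀ i ∈ s, b i ∈ Set.Icc (0:ℝ) 1 := fun i hi => hb i (mem_cons_of_mem hi)
    have hA : ∏ i ∈ s, a i ∈ Set.Icc (0:ℝ) 1 :=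
      ⟨Finset.prod_nonneg fun i hi => (ha' i hi).1,
       Finset.prod_le_one (fun i hi => (ha' i hi).1) (fun i hi => (ha' i hi).2)⟩
    have hB : ∏ i ∈ s, b i ∈ Set.Icc (0:ℝ) 1 :=
      ⟨Finset.prod_nonneg fun i hi => (hb' i hi).1,
       Finset.prod_le_one (fun i hi => (hb' i hi).1) (fun i hi => (hb' i hi).2)⟩
    rw [Finset.prod_cons hj, Finset.prod_cons hj, Finset.sum_cons hj]
    set A := ∏ i ∈ s, a i
    set B := ∏ i ∈ s, b i
    have key : a j * A - b j * B = a j * (A - B) + (a j - b j) * B := by ring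
    calc |a j * A - b j * B| ≤ |a j * (A - B)| + |(a j - b j) * B| := by
          rw [key]; exact abs_add_le _ _
      _ = |a j| * |A - B| + |a j - b j| * |B| := by rw [abs_mul, abs_mul]
      _ ≤ 1 * |A - B| + |a j - b j| * 1 := by
          gcongr
          · exact abs_le.2 ⟨by linarith [haj.1], haj.2⟩
          · exact abs_le.2 ⟨by linarith [hB.1], hB.2⟩
      _ ≤ |a j - b j| + ∑ i ∈ s, |a i - b i| := by
          have := ih ha' hb'
          simp only [one_mul, mul_one]
          linarith

lemma pow_sub_pow_abs_le' (a b : ℝ) (ha : a ∈ Set.Icc (0:ℝ) 1) (hb : b ∈ Set.Icc (0:ℝ) 1)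
    (k : ℕ) : |a ^ k - b ^ k| ≤ k * |a - b| := by
  have := prod_sub_prod_abs_le (Finset.range k) (fun _ => a) (fun _ => b)
    (fun i _ => ha) (fun i _ => hb)
  simpa using this


/-- if the total-offspring laws are tight, then the generating
function is uniformly continuous with respect to sup-norm distances. -/
theorem stmt8 {X Y : Type*} [Countable X]
    (μ : Y → (X →₀ ℕ) → ℝ)
    (hnonneg : ∀ y f, 0 ≤ μ y f) (hprob : ∀ y, HasSum (μ y) 1)
    (htight : ∀ ε : ℝ, 0 < ε → ∃ n : ℕ, ∀ y : Y,
      1 - ε < ∑' f : {f : X →₀ ℕ // (f.sum fun _ k => k) ≤ n}, μ y f) :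
    ∀ ε : ℝ, 0 < ε → ∃ δ : ℝ, 0 < δ ∧
      ∀ z v : X → ℝ, (∀ x, z x ∈ Set.Icc (0 : ℝ) 1) →
        (∀ x, v x ∈ Set.Icc (0 : ℝ) 1) → (∀ x, |z x - v x| ≤ δ) →
        ∀ y : Y,
          |(∑' f : X →₀ ℕ, μ y f * ∏ x ∈ f.support, z x ^ f x) -
            ∑' f : X →₀ ℕ, μ y f * ∏ x ∈ f.support, v x ^ f x| ≤ ε := by
  intro ε hε
  obtain ⟨n, hn⟩ := htight (ε/2) (by positivity)
  set δ : ℝ := ε / (2 * (n + 1)) with hδdef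
  have hδpos : 0 < δ := by positivity
  refine ⟨δ, hδpos, ?_⟩
  intro z v hz hv hzv y
  set P : (X → ℝ) → (X →₀ ℕ) → ℝ := fun w f => ∏ x ∈ f.support, w x ^ f x with hP
  have hP01 : ∀ (w : X → ℝ), (∀ x, w x ∈ Set.Icc (0:ℝ) 1) → ∀ f, P w f ∈ Set.Icc (0:ℝ) 1 := by
    intro w hw f
    exact ⟨Finset.prod_nonneg fun x _ => pow_nonneg (hw x).1 _,
      Finset.prod_le_one (fun x _ => pow_nonneg (hw x).1 _)
        (fun x _ => pow_le_one₀ (hw x).1 (hw x).2)⟩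
  have hsum : Summable (μ y) := (hprob y).summable
  have hsum1 : Summable (fun f => μ y f * P z f) := by
    apply Summable.of_nonneg_of_le (fun f => mul_nonneg (hnonneg y f) (hP01 z hz f).1)
      (fun f => ?_) hsum
    calc μ y f * P z f ≤ μ y f * 1 := by
          exact mul_le_mul_of_nonneg_left (hP01 z hz f).2 (hnonneg y f)
      _ = μ y f := mul_one _
  have hsum2 : Summable (fun f => μ y f * P v f) := by
    apply Summable.of_nonneg_of_le (fun f => mul_nonneg (hnonneg y f) (hP01 v hv f).1)
      (fun f => ?_) hsum
    calc μ y f * P v f ≤ μ y f * 1 := by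
          exact mul_le_mul_of_nonneg_left (hP01 v hv f).2 (hnonneg y f)
      _ = μ y f := mul_one _
  -- pointwise bound on the difference of products
  have hPdiff : ∀ f : X →₀ ℕ, |P z f - P v f| ≤ (f.sum fun _ k => k) * δ := by
    intro f
    have h1 : |P z f - P v f| ≤ ∑ x ∈ f.support, |z x ^ f x - v x ^ f x| :=
      prod_sub_prod_abs_le f.support (fun x => z x ^ f x) (fun x => v x ^ f x)
        (fun x _ => ⟨pow_nonneg (hz x).1 _, pow_le_one₀ (hz x).1 (hz x).2⟩)
        (fun x _ => ⟨pow_nonneg (hv x).1 _, pow_le_one₀ (hv x).1 (hv x).2⟩)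
    have h2 : ∑ x ∈ f.support, |z x ^ f x - v x ^ f x| ≤ ∑ x ∈ f.support, (f x : ℝ) * δ := by
      apply Finset.sum_le_sum
      intro x _
      calc |z x ^ f x - v x ^ f x| ≤ (f x : ℝ) * |z x - v x| :=
            pow_sub_pow_abs_le' _ _ (hz x) (hv x) _
        _ ≤ (f x : ℝ) * δ := mul_le_mul_of_nonneg_left (hzv x) (Nat.cast_nonneg _)
    have h3 : ∑ x ∈ f.support, (f x : ℝ) * δ = ((f.sum fun _ k => k : ℕ) : ℝ) * δ := by
      rw [Finsupp.sum, Nat.cast_sum, Finset.sum_mul]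
    linarith [h1, h2, h3.le, h3.ge]
  -- dominating function
  set s : Set (X →₀ ℕ) := {f | (f.sum fun _ k => k) ≤ n} with hs
  classical
  set h : (X →₀ ℕ) → ℝ := fun f => if f ∈ s then (n * δ) * μ y f else μ y f with hh
  have hnδ0 : (0:ℝ) ≤ n * δ := by positivity
  have hgle : ∀ f, |μ y f * P z f - μ y f * P v f| ≤ h f := by
    intro f
    rw [← mul_sub, abs_mul, abs_of_nonneg (hnonneg y f)]
    by_cases hf : f ∈ s
    · simp only [hh, hf, if_pos]
      calc μ y f * |P z f - P v f| ≤ μ y f * ((f.sum fun _ k => k) * δ) :=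
            mul_le_mul_of_nonneg_left (hPdiff f) (hnonneg y f)
        _ ≤ μ y f * (n * δ) := by
            apply mul_le_mul_of_nonneg_left _ (hnonneg y f)
            apply mul_le_mul_of_nonneg_right _ hδpos.le
            exact_mod_cast hf
        _ = (n * δ) * μ y f := mul_comm _ _
    · simp only [hh, hf, if_neg, if_false]
      calc μ y f * |P z f - P v f| ≤ μ y f * 1 := by
            apply mul_le_mul_of_nonneg_left _ (hnonneg y f)
            rw [abs_sub_le_iff]
            constructor
            · linarith [(hP01 z hz f).2, (hP01 v hv f).1]
            · linarith [(hP01 v hv f).2, (hP01 z hz f).1]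
        _ = μ y f := mul_one _
  have hsumh : Summable h := by
    apply Summable.of_nonneg_of_le (fun f => ?_) (fun f => ?_) (hsum.mul_left (n * δ + 1))
    · by_cases hf : f ∈ s
      · simp only [hh, hf, if_pos]
        exact mul_nonneg hnδ0 (hnonneg y f)
      · simp only [hh, hf, if_neg, if_false]
        exact hnonneg y f
    · by_cases hf : f ∈ s
      · simp only [hh, hf, if_pos]
        nlinarith [hnonneg y f]
      · simp only [hh, hf, if_neg, if_false]
        nlinarith [hnonneg y f]
  have hsumg : Summable (fun f => μ y f * P z f - μ y f * P v f) := hsum1.sub hsum2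
  -- key inequality
  have habs : |∑' f : X →₀ ℕ, (μ y f * P z f - μ y f * P v f)| ≤ ∑' f, h f := by
    calc |∑' f : X →₀ ℕ, (μ y f * P z f - μ y f * P v f)|
        ≤ ∑' f, |μ y f * P z f - μ y f * P v f| := by
          have := norm_tsum_le_tsum_norm (f := fun f => μ y f * P z f - μ y f * P v f)
            (by simpa [Real.norm_eq_abs] using hsumg.abs)
          simpa [Real.norm_eq_abs] using this
      _ ≤ ∑' f, h f := Summable.tsum_le_tsum hgle hsumg.abs hsumh
  -- computing the tsum of h
  have hsumind : Summable (s.indicator (μ y)) := hsum.indicator s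
  have hsumindc : Summable (sᶜ.indicator (μ y)) := hsum.indicator sᶜ
  have hhsplit : ∀ f, h f = (n * δ) * s.indicator (μ y) f + sᶜ.indicator (μ y) f := by
    intro f
    by_cases hf : f ∈ s
    · simp [hh, hf, Set.indicator_of_mem hf, Set.indicator_of_notMem (by simpa using hf : f ∉ sᶜ)]
    · simp [hh, hf, Set.indicator_of_notMem hf, Set.indicator_of_mem (by simpa using hf : f ∈ sᶜ)]
  set A : ℝ := ∑' f : s, μ y f with hA
  have hAind : ∑' f, s.indicator (μ y) f = A := (tsum_subtype s (μ y)).symm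
  have hcompl : A + ∑' f : ↥sᶜ, μ y f = 1 := by
    rw [hA]
    rw [Summable.tsum_add_tsum_compl (s := s) (hsum.subtype s) (hsum.subtype sᶜ)]
    exact hprob y |>.tsum_eq
  have hAcind : ∑' f, sᶜ.indicator (μ y) f = 1 - A := by
    rw [← tsum_subtype sᶜ (μ y)]; linarith
  have htsumh : ∑' f, h f = (n * δ) * A + (1 - A) := by
    calc ∑' f, h f = ∑' f, ((n * δ) * s.indicator (μ y) f + sᶜ.indicator (μ y) f) :=
          tsum_congr hhsplit
      _ = (n * δ) * ∑' f, s.indicator (μ y) f + ∑' f, sᶜ.indicator (μ y) f := by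
          rw [Summable.tsum_add (hsumind.mul_left _) hsumindc, tsum_mul_left]
      _ = (n * δ) * A + (1 - A) := by rw [hAind, hAcind]
  -- bounds on A and n*δ
  have hA0 : 0 ≤ A := tsum_nonneg fun f => hnonneg y f
  have hAc0 : 0 ≤ ∑' f : ↥sᶜ, μ y f := tsum_nonneg fun f => hnonneg y f
  have hA1 : A ≤ 1 := by linarith
  have htail : 1 - A ≤ ε / 2 := by
    have := hn y
    have heq : (∑' f : {f : X →₀ ℕ // (f.sum fun _ k => k) ≤ n}, μ y f) = A := rfl
    linarith [heq ▸ this]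
  have hnδ : (n : ℝ) * δ ≤ ε / 2 := by
    have hpos : (0:ℝ) < 2*((n:ℝ)+1) := by positivity
    rw [hδdef, mul_div_assoc', div_le_div_iff₀ hpos (by norm_num : (0:ℝ) < 2)]
    nlinarith [hε.le, Nat.cast_nonneg (α := ℝ) n]
  -- assemble
  have hfinal : ∑' f, h f ≤ ε := by
    rw [htsumh]; nlinarith
  calc |(∑' f : X →₀ ℕ, μ y f * P z f) - ∑' f : X →₀ ℕ, μ y f * P v f|
      = |∑' f : X →₀ ℕ, (μ y f * P z f - μ y f * P v f)| := by
        rw [Summable.tsum_sub hsum1 hsum2]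
    _ ≤ ∑' f, h f := habs
    _ ≤ ε := hfinal
end

section
/- With pₙ ∈ (0,1), ∑ₙ(1−pₙ) < ∞, and G(z|n) = 1 − pₙ + pₙ z(n+1): for any z₀ ∈ (1 − ∏_{i=0}^∞ pᵢ, 1), the recursion z_{n+1} := 1 − (1 − zₙ)/pₙ defines a strictly decreasing sequence satisfying zₙ > 1 − ∏_{i=n}^∞ pᵢ > 0 for all n; consequently z(n) := zₙ is a fixed point of G with sup_n z(n) = z₀ < 1. -/
/-- the recursion `z_{n+1} = 1 - (1 - zₙ)/pₙ` started in
`(1 - ∏ᵢ pᵢ, 1)` defines a strictly decreasing sequence with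
`zₙ > 1 - ∏_{i ≥ n} pᵢ > 0`, giving a fixed point of `G` with
`sup_n zₙ = z₀ < 1`. -/
theorem stmt14 (p : ℕ → ℝ) (hp : ∀ n, p n ∈ Set.Ioo (0 : ℝ) 1)
    (hsum : Summable fun n => 1 - p n)
    (z : ℕ → ℝ)
    (hz0 : z 0 ∈ Set.Ioo (1 - ∏' i : ℕ, p i) 1)
    (hrec : ∀ n, z (n + 1) = 1 - (1 - z n) / p n) :
    StrictAnti z ∧
    (∀ n, 1 - ∏' i : ℕ, p (n + i) < z n) ∧
    (∀ n, 0 < 1 - ∏' i : ℕ, p (n + i)) ∧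
    (∀ n, 1 - p n + p n * z (n + 1) = z n) ∧
    (⨆ n, z n) = z 0 ∧ z 0 < 1 := by
  obtain ⟨hz0l, hz0u⟩ := hz0
  have hp0 : ∀ n, 0 < p n := fun n => (hp n).1
  have hp1 : ∀ n, p n < 1 := fun n => (hp n).2
  -- summability of logs
  have hlog : Summable fun n => Real.log (p n) := by
    apply Summable.of_norm_bounded_eventually (hsum.mul_left 2)
    have htend : Filter.Tendsto (fun n => 1 - p n) Filter.atTop (nhds 0) :=
      hsum.tendsto_atTop_zero
    have hev : ∀ᶠ n in Filter.atTop, 1 - p n < 1/2 :=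
      htend.eventually (gt_mem_nhds (by norm_num))
    rw [Nat.cofinite_eq_atTop]
    filter_upwards [hev] with n hn
    have hpn2 : (1:ℝ)/2 < p n := by linarith
    have hlogle : Real.log (p n)⁻¹ ≤ (p n)⁻¹ - 1 :=
      Real.log_le_sub_one_of_pos (by positivity)
    have : ‖Real.log (p n)‖ = -Real.log (p n) := by
      rw [Real.norm_eq_abs, abs_of_nonpos]
      exact Real.log_nonpos (le_of_lt (hp0 n)) (le_of_lt (hp1 n))
    rw [this]
    rw [Real.log_inv] at hlogle
    have h1 : (p n)⁻¹ - 1 = (1 - p n) / p n := by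
      field_simp
    rw [h1] at hlogle
    have h2 : (1 - p n) / p n ≤ 2 * (1 - p n) := by
      rw [div_le_iff₀ (hp0 n)]
      nlinarith [hp0 n, hp1 n]
    linarith
  -- tail log sums and tail products
  have hlogn : ∀ n, Summable fun i => Real.log (p (n + i)) := by
    intro n
    have := (summable_nat_add_iff n).mpr hlog
    exact this.congr fun i => by rw [add_comm]
  have hhasprod : ∀ n, HasProd (fun i => p (n + i))
      (Real.exp (∑' i, Real.log (p (n + i)))) := by
    intro n
    have h := (hlogn n).hasSum.rexp
    have heq : (Real.exp ∘ fun i => Real.log (p (n + i))) = fun i => p (n + i) :=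
      funext fun i => Real.exp_log (hp0 _)
    rwa [heq] at h
  have hQeq : ∀ n, (∏' i, p (n + i)) = Real.exp (∑' i, Real.log (p (n + i))) :=
    fun n => (hhasprod n).tprod_eq
  have hQpos : ∀ n, 0 < ∏' i, p (n + i) := fun n => (hQeq n) ▸ Real.exp_pos _
  have hQle1 : ∀ n, (∏' i, p (n + i)) ≤ 1 := by
    intro n
    rw [hQeq n, ← Real.exp_zero]
    apply Real.exp_le_exp.mpr
    exact tsum_nonpos fun i => Real.log_nonpos (le_of_lt (hp0 _)) (le_of_lt (hp1 _))
  have hQrec : ∀ n, (∏' i, p (n + i)) = p n * ∏' i, p ((n + 1) + i) := by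
    intro n
    have hmul : Multipliable fun i => p (n + (i + 1)) :=
      ((hhasprod (n + 1)).multipliable).congr fun i => by ring_nf
    have := tprod_eq_zero_mul' (f := fun i => p (n + i)) hmul
    simp only [add_zero] at this
    rw [this]
    congr 1
    exact tprod_congr fun i => by ring_nf
  have hQlt1 : ∀ n, (∏' i, p (n + i)) < 1 := by
    intro n
    rw [hQrec n]
    calc p n * ∏' i, p ((n + 1) + i) ≤ p n * 1 :=
          mul_le_mul_of_nonneg_left (hQle1 (n + 1)) (le_of_lt (hp0 n))
      _ = p n := mul_one _
      _ < 1 := hp1 n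
  -- key induction
  have key : ∀ n, 1 - ∏' i, p (n + i) < z n ∧ z n < 1 := by
    intro n
    induction n with
    | zero =>
      constructor
      · have : (∏' i, p (0 + i)) = ∏' i, p i := tprod_congr fun i => by rw [zero_add]
        rw [this]; exact hz0l
      · exact hz0u
    | succ n ih =>
      obtain ⟨ih1, ih2⟩ := ih
      have h1zn : 0 < 1 - z n := by linarith
      have h1 : 1 - z (n + 1) = (1 - z n) / p n := by rw [hrec n]; ring
      have ih1' : 1 - z n < ∏' i, p (n + i) := by linarith
      have h2 : (1 - z n) / p n < (∏' i, p (n + i)) / p n :=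
        (div_lt_div_iff_of_pos_right (hp0 n)).mpr ih1'
      have h3 : (∏' i, p (n + i)) / p n = ∏' i, p ((n + 1) + i) := by
        rw [hQrec n, mul_comm, mul_div_assoc, div_self (ne_of_gt (hp0 n)), mul_one]
      constructor
      · rw [h3] at h2
        linarith [h1]
      · have : 0 < (1 - z n) / p n := div_pos h1zn (hp0 n)
        linarith [h1, this]
  -- strict antitonicity
  have hanti : StrictAnti z := by
    apply strictAnti_nat_of_succ_lt
    intro n
    have h1zn : 0 < 1 - z n := by linarith [(key n).2]
    have h1 : 1 - z (n + 1) = (1 - z n) / p n := by rw [hrec n]; ring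
    have : 1 - z n < (1 - z n) / p n := by
      rw [lt_div_iff₀ (hp0 n)]
      nlinarith [hp0 n, hp1 n]
    linarith
  refine ⟨hanti, fun n => (key n).1, fun n => by linarith [hQlt1 n], ?_, ?_, hz0u⟩
  · intro n
    have := hrec n
    have hpne : p n ≠ 0 := ne_of_gt (hp0 n)
    rw [this]
    field_simp
    ring
  · have hbdd : BddAbove (Set.range z) := by
      refine ⟨z 0, ?_⟩
      rintro x ⟨n, rfl⟩
      exact hanti.antitone (Nat.zero_le n)
    exact le_antisymm (ciSup_le fun n => hanti.antitone (Nat.zero_le n)) (le_ciSup hbdd 0)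
end

section
/- Let pₙ, rₙ > 0 with pₙ + rₙ < 1 for n ≥ 1, r₀ = 0, pₙ ∈ (0,1), and ∑ₙ(1−pₙ) < ∞. For z₀ ∈ (1 − ∏_{i=0}^∞ pᵢ, 1) define z₁ := 1 − (1 − z₀)/p₀ and z_{n+1} := 1 + (1 − z_{n−1}) rₙ/pₙ − (1 − zₙ)/pₙ for n ≥ 1. Then (zₙ) is strictly decreasing and satisfies 1 − ∏_{i=n}^∞ pᵢ < zₙ < z_{n−1} ≤ z₀ for all n ≥ 1; in particular all zₙ ∈ (0,1) and sup_n zₙ = z₀ < 1. -/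
open Real Filter Finset

private lemma stmt15_log_summable {p : ℕ → ℝ} (hp : ∀ n, p n ∈ Set.Ioo (0 : ℝ) 1)
    (hsum : Summable fun n => 1 - p n) : Summable fun n => Real.log (p n) := by
  have htend : Tendsto (fun n => 1 - p n) atTop (nhds 0) := hsum.tendsto_atTop_zero
  have hev : ∀ᶠ n in atTop, (1 : ℝ) - p n < 1/2 :=
    htend.eventually (eventually_lt_nhds (by norm_num))
  have hbound : ∀ᶠ n in atTop, ‖Real.log (p n)‖ ≤ 2 * (1 - p n) := by
    filter_upwards [hev] with n hn
    have hp0 : 0 < p n := (hp n).1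
    have hp1 : p n < 1 := (hp n).2
    have hhalf : (1:ℝ)/2 < p n := by linarith
    have hlogle : Real.log (p n) ≤ 0 := Real.log_nonpos hp0.le hp1.le
    have hinv : Real.log (p n)⁻¹ ≤ (p n)⁻¹ - 1 :=
      Real.log_le_sub_one_of_pos (by positivity)
    rw [Real.log_inv] at hinv
    have hinv2 : (p n)⁻¹ - 1 ≤ 2 * (1 - p n) := by
      rw [inv_eq_one_div, div_sub' (ne_of_gt hp0), div_le_iff₀ hp0]
      nlinarith
    rw [Real.norm_eq_abs, abs_of_nonpos hlogle]
    linarith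
  exact Summable.of_norm_bounded_eventually (hsum.mul_left 2)
    (by rwa [Nat.cofinite_eq_atTop])

private lemma stmt15_multipliable {p : ℕ → ℝ} (hp : ∀ n, p n ∈ Set.Ioo (0 : ℝ) 1)
    (hsum : Summable fun n => 1 - p n) (k : ℕ) :
    Multipliable fun i => p (i + k) := by
  have hlog := stmt15_log_summable hp hsum
  have hlogk : Summable fun n => Real.log (p (n + k)) :=
    (summable_nat_add_iff k).2 hlog
  exact Real.multipliable_of_summable_log (fun n => (hp _).1) hlogk

/-- the two-step recursion
`z_{n+1} = 1 + (1 - z_{n-1}) rₙ/pₙ - (1 - zₙ)/pₙ` started in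
`(1 - ∏ᵢ pᵢ, 1)` is strictly decreasing and satisfies
`1 - ∏_{i ≥ n} pᵢ < zₙ`, all `zₙ ∈ (0,1)`, and `sup_n zₙ = z₀ < 1`. -/
theorem stmt15 (p r : ℕ → ℝ) (hp : ∀ n, p n ∈ Set.Ioo (0 : ℝ) 1)
    (hsum : Summable fun n => 1 - p n)
    (hr0 : r 0 = 0)
    (hr : ∀ n, 1 ≤ n → 0 < r n ∧ p n + r n < 1)
    (z : ℕ → ℝ)
    (hz0 : z 0 ∈ Set.Ioo (1 - ∏' i : ℕ, p i) 1)
    (hz1 : z 1 = 1 - (1 - z 0) / p 0)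
    (hrec : ∀ n, z (n + 2) =
      1 + (1 - z n) * r (n + 1) / p (n + 1) - (1 - z (n + 1)) / p (n + 1)) :
    StrictAnti z ∧
    (∀ n, 1 - ∏' i : ℕ, p (n + i) < z n) ∧
    (∀ n, 0 < z n ∧ z n < 1) ∧
    (⨆ n, z n) = z 0 ∧ z 0 < 1 := by
  obtain ⟨hz0l, hz0u⟩ := hz0
  have hp0 : ∀ n, 0 < p n := fun n => (hp n).1
  have hp1 : ∀ n, p n < 1 := fun n => (hp n).2
  -- tail product identities
  have hQid : ∀ k, (∏ i ∈ Finset.range k, p i) * (∏' i, p (k + i)) = ∏' i, p i := by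
    intro k
    have h1 : Multipliable fun n => p (n + k) := stmt15_multipliable hp hsum k
    have h2 := Multipliable.prod_mul_tprod_nat_mul' (f := p) (k := k) h1
    rw [← h2]
    congr 1
    exact tprod_congr fun i => by rw [add_comm]
  have hPpos : ∀ k, 0 < ∏ i ∈ Finset.range k, p i :=
    fun k => Finset.prod_pos fun i _ => hp0 i
  have hQ0pos : 0 < ∏' i, p i := by linarith
  have hQpos : ∀ k, 0 < ∏' i, p (k + i) := by
    intro k
    by_contra hle
    push_neg at hle
    have h := hQid k
    nlinarith [mul_nonpos_of_nonneg_of_nonpos (hPpos k).le hle]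
  have hQstep : ∀ k, (∏' i, p (k + i)) = p k * ∏' i, p (k + 1 + i) := by
    intro k
    have h1 := hQid k
    have h2 := hQid (k + 1)
    rw [Finset.prod_range_succ] at h2
    have hP := (hPpos k).ne'
    have : (∏ i ∈ Finset.range k, p i) * (∏' i, p (k + i)) =
        (∏ i ∈ Finset.range k, p i) * (p k * ∏' i, p (k + 1 + i)) := by
      rw [h1, ← h2]; ring
    exact mul_left_cancel₀ hP this
  have hQle1 : ∀ k, (∏' i, p (k + i)) ≤ 1 := by
    intro k
    have hm : Multipliable fun i => p (k + i) :=
      (stmt15_multipliable hp hsum k).congr fun n => by rw [add_comm]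
    refine le_of_tendsto' hm.hasProd.tendsto_prod_nat fun N => ?_
    exact Finset.prod_le_one (fun i _ => (hp0 _).le) (fun i _ => (hp1 _).le)
  -- key induction
  have key : ∀ n, z (n + 1) < z n ∧ (1 - z (n + 1) < ∏' i, p (n + 1 + i)) ∧
      0 < 1 - z n := by
    intro n
    induction n with
    | zero =>
      have ha0 : 0 < 1 - z 0 := by linarith
      have haQ : 1 - z 0 < ∏' i, p i := by linarith
      have h1z1 : 1 - z 1 = (1 - z 0) / p 0 := by rw [hz1]; ring
      have hq0 : (∏' i, p (0 + i)) = p 0 * ∏' i, p (0 + 1 + i) := hQstep 0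
      have hq0' : (∏' i, p (0 + i)) = ∏' i, p i := tprod_congr fun i => by rw [zero_add]
      refine ⟨?_, ?_, ha0⟩
      · have : 1 - z 0 < (1 - z 0) / p 0 := by
          rw [lt_div_iff₀ (hp0 0)]; nlinarith [hp1 0, ha0]
        linarith
      · rw [h1z1, div_lt_iff₀ (hp0 0)]
        rw [hq0'] at hq0
        nlinarith [hQpos 1, hp0 0]
    | succ n ih =>
      obtain ⟨h1, h2, h3⟩ := ih
      have hB : 0 < 1 - z (n + 1) := by linarith
      have hAB : 1 - z n < 1 - z (n + 1) := by linarith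
      obtain ⟨hrpos, hpr⟩ := hr (n + 1) (by omega)
      have hppos := hp0 (n + 1)
      have hC : 1 - z (n + 2) =
          ((1 - z (n + 1)) - (1 - z n) * r (n + 1)) / p (n + 1) := by
        rw [hrec n]; field_simp; ring
      have hCB : 1 - z (n + 1) < 1 - z (n + 2) := by
        rw [hC, lt_div_iff₀ hppos]
        nlinarith [mul_lt_mul_of_pos_right hAB hrpos]
      have hCQ : 1 - z (n + 2) < ∏' i, p (n + 2 + i) := by
        rw [hC, div_lt_iff₀ hppos]
        have hq := hQstep (n + 1)
        nlinarith [mul_pos h3 hrpos, hQpos (n + 2)]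
      refine ⟨?_, ?_, hB⟩
      · show z (n + 2) < z (n + 1)
        linarith
      · show 1 - z (n + 2) < ∏' i, p (n + 2 + i)
        exact hCQ
  have hanti : StrictAnti z := strictAnti_nat_of_succ_lt fun n => (key n).1
  have hlt1 : ∀ n, z n < 1 := fun n => by have := (key n).2.2; linarith
  have hlow : ∀ n, 1 - (∏' i, p (n + i)) < z n := by
    intro n
    match n with
    | 0 =>
      have : (∏' i, p (0 + i)) = ∏' i, p i := tprod_congr fun i => by rw [zero_add]
      rw [this]; exact hz0l
    | Nat.succ m =>
      have := (key m).2.1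
      linarith
  refine ⟨hanti, hlow, fun n => ⟨?_, hlt1 n⟩, ?_, hz0u⟩
  · have := hlow n
    have := hQle1 n
    linarith
  · have hbdd : BddAbove (Set.range z) := by
      refine ⟨z 0, ?_⟩
      rintro x ⟨n, rfl⟩
      exact hanti.antitone (Nat.zero_le n)
    exact le_antisymm (ciSup_le fun n => hanti.antitone (Nat.zero_le n))
      (le_ciSup hbdd 0)
end
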